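/- Let A → B be a finite étale morphism of k-algebras (k perfect of characteristic p > 0) and let N' be a finitely presented module over B' (B with k-structure twisted by Frobenius). Then the natural map N' ⊗_{A', F_A} A → N' ⊗_{B', F_B} B, n' ⊗ a ↦ n' ⊗ a, is an isomorphism of A-modules. Equivalently: for a finite étale ring map A → B and a finitely presented B-module N, base change of N along the Frobenius of A agrees with base change along the Frobenius of B. -/

import Mathlib

open TensorProduct

/-- `FrobAlg A p` is `A` viewed as an algebra over itself via Frobenius. -/
def FrobAlg (A : Type*) [CommRing A] (p : ℕ) [Fact p.Prime] [CharP A p] : Type _ := A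

namespace FrobAlg

variable (A : Type*) [CommRing A] (p : ℕ) [Fact p.Prime] [CharP A p]

instance : CommRing (FrobAlg A p) := inferInstanceAs (CommRing A)

noncomputable instance : Algebra A (FrobAlg A p) :=
  RingHom.toAlgebra (frobenius A p)

/-- The identity of `A`, viewed as a map `FrobAlg A p → A`. -/
def out (x : FrobAlg A p) : A := x

/-- The identity of `A`, viewed as a map `A → FrobAlg A p`. -/
def mk (x : A) : FrobAlg A p := x

end FrobAlg


open TensorProduct

section CharAux

lemma charP_of_ringHom {B T : Type*} [NonAssocSemiring B] [NonAssocSemiring T] [Nontrivial T]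
    (f : B →+* T) (p : ℕ) [Fact p.Prime] [CharP B p] : CharP T p := by
  have hp : ((p : ℕ) : T) = 0 := by
    rw [← map_natCast f, CharP.cast_eq_zero, map_zero]
  have h := ringChar.dvd (R := T) hp
  rcases (Fact.out : p.Prime).eq_one_or_self_of_dvd _ h with h1 | h1
  · exfalso
    have h2 : ((1 : ℕ) : T) = 0 := by
      rw [ringChar.spec, h1]
    simp at h2
  · exact ringChar.of_eq h1

end CharAux

section NilpotentAux

lemma isNilpotent_span_finset {R : Type*} [CommRing R] (s : Finset R)
    (h : ∀ x ∈ s, IsNilpotent x) : IsNilpotent (Ideal.span (s : Set R)) := by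
  classical
  induction s using Finset.induction_on with
  | empty => exact ⟨1, by simp⟩
  | @insert a s ha ih =>
    rw [Finset.coe_insert, Ideal.span_insert]
    obtain ⟨m, hm⟩ := h a (Finset.mem_insert_self a s)
    obtain ⟨n, hn⟩ := ih (fun x hx => h x (Finset.mem_insert_of_mem hx))
    refine ⟨m + n, ?_⟩
    have h1 : (Ideal.span ({a} : Set R)) ^ m = ⊥ := by
      rw [Ideal.span_singleton_pow, hm, Ideal.span_singleton_eq_bot]
    have h2 : (Ideal.span (s : Set R)) ^ n = ⊥ := by
      rw [← Ideal.zero_eq_bot]; exact hn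
    have := Ideal.sup_pow_add_le_pow_sup_pow
      (I := Ideal.span ({a} : Set R)) (J := Ideal.span (s : Set R)) (n := m) (m := n)
    rw [h1, h2, sup_idem] at this
    rw [Ideal.zero_eq_bot]
    exact le_bot_iff.mp this

end NilpotentAux

section Lifting

universe u v

variable {R S T : Type u} [CommRing R] [CommRing S] [CommRing T]
variable [Algebra R S] [Algebra R T]

/-- A surjection of `R`-algebras with a nil kernel onto a formally smooth, finitely
presented algebra admits an algebra section. -/
lemma exists_section_of_formallySmooth [Algebra.FormallySmooth R S]
    [Algebra.FinitePresentation R S]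
    (q : T →ₐ[R] S) (hq : Function.Surjective q)
    (hker : ∀ x ∈ RingHom.ker q, IsNilpotent x) :
    ∃ σ : S →ₐ[R] T, ∀ s, q (σ s) = s := by
  classical
  obtain ⟨n, f, hfsurj, hfker⟩ := Algebra.FinitePresentation.out (R := R) (A := S)
  obtain ⟨G, hG⟩ := hfker
  choose u hu using fun i : Fin n => hq (f (MvPolynomial.X i))
  let α : MvPolynomial (Fin n) R →ₐ[R] T := MvPolynomial.aeval u
  have hqα : ∀ x, q (α x) = f x := by
    intro x
    have : q.comp α = f := by
      apply MvPolynomial.algHom_ext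
      intro i
      simp [α, hu]
    exact DFunLike.congr_fun this x
  set K₀ : Ideal T := Ideal.span (⇑α '' (G : Set (MvPolynomial (Fin n) R))) with hK₀
  have hGker : ∀ g ∈ G, f g = 0 := by
    intro g hg
    have : g ∈ RingHom.ker f.toRingHom := by
      rw [← hG]; exact Ideal.subset_span hg
    exact this
  have hK₀q : K₀ ≤ RingHom.ker q := by
    rw [hK₀, Ideal.span_le]
    rintro _ ⟨g, hg, rfl⟩
    show q (α g) = 0
    rw [hqα, hGker g hg]
  have hK₀nil : IsNilpotent K₀ := by
    have : (⇑α '' (G : Set (MvPolynomial (Fin n) R))) = ((G.image ⇑α : Finset T) : Set T) := by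
      simp
    rw [hK₀, this]
    apply isNilpotent_span_finset
    intro x hx
    simp only [Finset.mem_image] at hx
    obtain ⟨g, hg, rfl⟩ := hx
    exact hker _ (by show q (α g) = 0; rw [hqα, hGker g hg])
  have hkerle : RingHom.ker f.toRingHom ≤
      RingHom.ker ((Ideal.Quotient.mkₐ R K₀).comp α) := by
    rw [← hG, Ideal.span_le]
    intro g hg
    show Ideal.Quotient.mk K₀ (α g) = 0
    rw [Ideal.Quotient.eq_zero_iff_mem]
    exact Ideal.subset_span ⟨g, hg, rfl⟩
  let e := Ideal.quotientKerAlgEquivOfSurjective hfsurj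
  let β : S →ₐ[R] T ⧸ K₀ :=
    (Ideal.Quotient.liftₐ (RingHom.ker f) ((Ideal.Quotient.mkₐ R K₀).comp α)
      (fun a ha => hkerle ha)).comp e.symm.toAlgHom
  have hβ : ∀ x, β (f x) = Ideal.Quotient.mk K₀ (α x) := by
    intro x
    have h1 : e.symm (f x) = Ideal.Quotient.mk (RingHom.ker f) x := by
      apply e.injective
      rw [AlgEquiv.apply_symm_apply]
      rfl
    have h2 : β (f x) = (Ideal.Quotient.liftₐ (RingHom.ker f)
        ((Ideal.Quotient.mkₐ R K₀).comp α) (fun a ha => hkerle ha)) (e.symm (f x)) := rfl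
    rw [h2, h1]
    rfl
  let σ := Algebra.FormallySmooth.lift K₀ hK₀nil β
  refine ⟨σ, ?_⟩
  intro s
  obtain ⟨x, rfl⟩ := hfsurj s
  have h2 : Ideal.Quotient.mk K₀ (σ (f x)) = Ideal.Quotient.mk K₀ (α x) := by
    rw [show Ideal.Quotient.mk K₀ (σ (f x)) = β (f x) from
      Algebra.FormallySmooth.mk_lift K₀ hK₀nil β (f x), hβ]
  rw [Ideal.Quotient.mk_eq_mk_iff_sub_mem] at h2
  have h3 : q (σ (f x) - α x) = 0 := hK₀q h2
  rw [map_sub, sub_eq_zero] at h3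
  rw [h3, hqα]

/-- Uniqueness: over a formally unramified finite-type algebra, a section composed
with the projection is the identity when the kernel is nil. -/
lemma section_comp_eq_id_of_formallyUnramified [Algebra.FormallyUnramified R T]
    [Algebra.FiniteType R T]
    (q : T →ₐ[R] S) (σ : S →ₐ[R] T) (hσ : ∀ s, q (σ s) = s)
    (hker : ∀ x ∈ RingHom.ker q, IsNilpotent x) :
    ∀ t, σ (q t) = t := by
  classical
  obtain ⟨s, hs⟩ := (Algebra.FiniteType.out : (⊤ : Subalgebra R T).FG)
  set h : T →ₐ[R] T := σ.comp q with hh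
  have hkerh : ∀ t : T, h t - t ∈ RingHom.ker q := by
    intro t
    show q (h t - t) = 0
    rw [map_sub, show h t = σ (q t) from rfl, hσ, sub_self]
  set K₀ : Ideal T := Ideal.span ((fun t => h t - t) '' (s : Set T)) with hK₀
  have hnil : IsNilpotent K₀ := by
    have : ((fun t => h t - t) '' (s : Set T)) = ((s.image (fun t => h t - t) : Finset T) : Set T) := by
      simp
    rw [hK₀, this]
    apply isNilpotent_span_finset
    intro x hx
    simp only [Finset.mem_image] at hx
    obtain ⟨t, ht, rfl⟩ := hx
    exact hker _ (hkerh t)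
  have key : ∀ x, Ideal.Quotient.mk K₀ (h x) = Ideal.Quotient.mk K₀ ((AlgHom.id R T) x) := by
    have hle : Algebra.adjoin R (s : Set T) ≤
        AlgHom.equalizer ((Ideal.Quotient.mkₐ R K₀).comp h) (Ideal.Quotient.mkₐ R K₀) := by
      apply Algebra.adjoin_le
      intro x hx
      show Ideal.Quotient.mk K₀ (h x) = Ideal.Quotient.mk K₀ x
      rw [Ideal.Quotient.mk_eq_mk_iff_sub_mem]
      exact Ideal.subset_span ⟨x, hx, rfl⟩
    intro x
    have hx : x ∈ Algebra.adjoin R (s : Set T) := hs ▸ trivial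
    exact hle hx
  have : h = AlgHom.id R T := Algebra.FormallyUnramified.ext K₀ hnil key
  intro t
  exact DFunLike.congr_fun this t

end Lifting

section Adjoin

universe u

/-- For a finite unramified algebra in characteristic `p`, `B` is generated over `A`
by `p`-th powers. -/
lemma adjoin_pPow_eq_top {A B : Type u} [CommRing A] [CommRing B] [Algebra A B]
    (p : ℕ) [Fact p.Prime] [CharP B p]
    [Module.Finite A B] [Algebra.FormallyUnramified A B] [Algebra.EssFiniteType A B] :
    Algebra.adjoin A (Set.range fun b : B => b ^ p) = ⊤ := by
  set C := Algebra.adjoin A (Set.range fun b : B => b ^ p) with hC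
  haveI : Module.Finite C B := Module.Finite.of_restrictScalars_finite A C B
  haveI : Algebra.FormallyUnramified C B := by
    constructor
    exact (KaehlerDifferential.map_surjective A C B).subsingleton
  haveI : Algebra.EssFiniteType C B := Algebra.EssFiniteType.of_comp A C B
  have htmul : ∀ s : B, s ⊗ₜ[C] (1 : B) = 1 ⊗ₜ[C] s := by
    rcases subsingleton_or_nontrivial (B ⊗[C] B) with hsub | hnt
    · intro s; exact Subsingleton.elim _ _
    · haveI : CharP (B ⊗[C] B) p :=
        charP_of_ringHom (Algebra.TensorProduct.includeLeftRingHom (R := C) (A := B) (B := B)) p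
      have hIfg := KaehlerDifferential.ideal_fg C B
      have hidem : IsIdempotentElem (KaehlerDifferential.ideal C B) :=
        (Ideal.cotangent_subsingleton_iff _).mp
          (inferInstanceAs (Subsingleton (Ω[B⁄C])))
      obtain ⟨e, he, hespan⟩ := (Ideal.isIdempotentElem_iff_of_fg _ hIfg).mp hidem
      have hnilrad : KaehlerDifferential.ideal C B ≤ nilradical (B ⊗[C] B) := by
        rw [← KaehlerDifferential.span_range_eq_ideal, Ideal.span_le]
        rintro _ ⟨s, rfl⟩
        rw [SetLike.mem_coe, mem_nilradical]
        refine ⟨p, ?_⟩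
        rw [sub_pow_char, Algebra.TensorProduct.tmul_pow, Algebra.TensorProduct.tmul_pow,
          one_pow]
        have hsC : s ^ p ∈ C := Algebra.subset_adjoin ⟨s, rfl⟩
        have h1 : (s ^ p : B) = algebraMap C B ⟨s ^ p, hsC⟩ := rfl
        rw [h1, ← Algebra.TensorProduct.algebraMap_apply,
          Algebra.TensorProduct.algebraMap_apply', sub_self]
      have he0 : e = 0 := by
        have hnil : IsNilpotent e := by
          rw [← mem_nilradical]
          apply hnilrad
          rw [hespan]
          exact Submodule.mem_span_singleton_self e
        obtain ⟨m, hm⟩ := hnil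
        rcases Nat.eq_zero_or_pos m with rfl | hmpos
        · rw [pow_zero] at hm; exact absurd hm one_ne_zero
        · obtain ⟨m', rfl⟩ := Nat.exists_eq_succ_of_ne_zero hmpos.ne'
          rw [he.pow_succ_eq] at hm; exact hm
      have hI0 : KaehlerDifferential.ideal C B = ⊥ := by
        rw [hespan, he0]
        simp
      intro s
      have hmem : (1 : B) ⊗ₜ[C] s - s ⊗ₜ[C] 1 ∈ KaehlerDifferential.ideal C B :=
        KaehlerDifferential.one_smul_sub_smul_one_mem_ideal C s
      rw [hI0, Ideal.mem_bot, sub_eq_zero] at hmem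
      exact hmem.symm
  have hsurj : Function.Surjective (algebraMap C B) :=
    Algebra.isEpi_iff_surjective_algebraMap_of_finite.mp
      ((Algebra.isEpi_iff_forall_one_tmul_eq C B).mpr fun s => (htmul s).symm)
  rw [eq_top_iff]
  intro b _
  obtain ⟨c, hc⟩ := hsurj b
  rw [← hc]
  exact c.2

end Adjoin


/-- Lemma 16.02.2018--2 (2): let `A → B` be a finite étale map of algebras over a perfect
field `k` of characteristic `p > 0` and let `N` be a finitely presented `B`-module.
Then the natural map `N ⊗_{A, F_A} A → N ⊗_{B, F_B} B`, `n ⊗ a ↦ n ⊗ a`, is an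
isomorphism: base change of `N` along the Frobenius of `A` agrees with base change along
the Frobenius of `B`. -/
theorem stmt_6.{u} (p : ℕ) [Fact p.Prime] (k : Type*) [Field k] [CharP k p]
    [PerfectRing k p] (A B : Type u) [CommRing A] [CommRing B] [CharP A p] [CharP B p]
    [Algebra k A] [Algebra A B] [Algebra.Etale A B] [Module.Finite A B]
    (N : Type*) [AddCommGroup N] [Module B N] [Module A N] [IsScalarTower A B N]
    [Module.FinitePresentation B N]
    (θ : (N ⊗[A] FrobAlg A p) →+ (N ⊗[B] FrobAlg B p))
    (hθ : ∀ (n : N) (a : FrobAlg A p),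
      θ (n ⊗ₜ[A] a) = n ⊗ₜ[B] FrobAlg.mk B p (algebraMap A B (FrobAlg.out A p a))) :
    Function.Bijective θ := by
  classical
  -- Local algebra instances relating `FrobAlg A p`, `B`, `FrobAlg B p`.
  letI iA1B1 : Algebra (FrobAlg A p) (FrobAlg B p) := inferInstanceAs (Algebra A B)
  letI iAB1 : Algebra A (FrobAlg B p) := ((frobenius B p).comp (algebraMap A B)).toAlgebra
  haveI iT1 : IsScalarTower A (FrobAlg A p) (FrobAlg B p) := by
    apply IsScalarTower.of_algebraMap_eq
    intro a
    show (frobenius B p) (algebraMap A B a) = algebraMap A B (frobenius A p a)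
    rw [frobenius_def, frobenius_def, map_pow]
  haveI iT2 : IsScalarTower A B (FrobAlg B p) := by
    apply IsScalarTower.of_algebraMap_eq
    intro a
    rfl
  -- The relative Frobenius `π : FrobAlg A p ⊗[A] B →ₐ[FrobAlg A p] FrobAlg B p`.
  let g : B →ₐ[A] FrobAlg B p :=
    { toRingHom := (show B →+* FrobAlg B p from frobenius B p), commutes' := fun a => rfl }
  let f : FrobAlg A p →ₐ[FrobAlg A p] FrobAlg B p := Algebra.ofId _ _
  let π : (FrobAlg A p ⊗[A] B) →ₐ[FrobAlg A p] FrobAlg B p :=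
    Algebra.TensorProduct.lift f g (fun x y => mul_comm _ _)
  have hπ : ∀ (a : FrobAlg A p) (b : B),
      π (a ⊗ₜ[A] b) = FrobAlg.mk B p (algebraMap A B (FrobAlg.out A p a) * b ^ p) := by
    intro a b
    rfl
  -- Surjectivity of `π`.
  haveI : Algebra.FiniteType A B := Algebra.FiniteType.of_finitePresentation
  have hadj : Algebra.adjoin A (Set.range fun b : B => b ^ p) = ⊤ := adjoin_pPow_eq_top p
  have hπsurj : Function.Surjective π := by
    intro b
    have key : ∀ (x : B) (_ : x ∈ Algebra.adjoin A (Set.range fun y : B => y ^ p)),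
        ∃ t, π t = FrobAlg.mk B p x := by
      intro x hx
      induction hx using Algebra.adjoin_induction with
      | mem x hxs =>
        obtain ⟨b₀, rfl⟩ := hxs
        refine ⟨(1 : FrobAlg A p) ⊗ₜ[A] b₀, ?_⟩
        rw [hπ]
        show (algebraMap A B 1 * b₀ ^ p : B) = b₀ ^ p
        rw [map_one, one_mul]
      | algebraMap a =>
        refine ⟨FrobAlg.mk A p a ⊗ₜ[A] (1 : B), ?_⟩
        rw [hπ]
        show (algebraMap A B a * (1 : B) ^ p : B) = algebraMap A B a
        rw [one_pow, mul_one]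
      | add x y hx hy ihx ihy =>
        obtain ⟨t1, h1⟩ := ihx
        obtain ⟨t2, h2⟩ := ihy
        exact ⟨t1 + t2, by rw [map_add, h1, h2]; rfl⟩
      | mul x y hx hy ihx ihy =>
        obtain ⟨t1, h1⟩ := ihx
        obtain ⟨t2, h2⟩ := ihy
        exact ⟨t1 * t2, by rw [map_mul, h1, h2]; rfl⟩
    have hb : FrobAlg.out B p b ∈ Algebra.adjoin A (Set.range fun y : B => y ^ p) := by
      rw [hadj]; trivial
    obtain ⟨t, ht⟩ := key _ hb
    exact ⟨t, ht⟩
  -- Injectivity of `π`.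
  have hπbij : Function.Bijective π := by
    rcases subsingleton_or_nontrivial (FrobAlg A p ⊗[A] B) with hS | hS
    · exact ⟨fun x y _ => Subsingleton.elim x y, hπsurj⟩
    · haveI : CharP (FrobAlg A p ⊗[A] B) p :=
        charP_of_ringHom
          (Algebra.TensorProduct.includeRight (R := A) (A := FrobAlg A p) (B := B)).toRingHom p
      -- the kernel of `π` consists of nilpotents
      have hfrob : ∀ z : FrobAlg A p ⊗[A] B,
          (1 : FrobAlg A p) ⊗ₜ[A] (FrobAlg.out B p (π z)) = z ^ p := by
        intro z
        induction z using TensorProduct.induction_on with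
        | zero =>
          rw [map_zero, zero_pow (Fact.out : p.Prime).ne_zero]
          show (1 : FrobAlg A p) ⊗ₜ[A] (0 : B) = 0
          rw [TensorProduct.tmul_zero]
        | tmul a b =>
          rw [hπ, Algebra.TensorProduct.tmul_pow]
          show (1 : FrobAlg A p) ⊗ₜ[A] (algebraMap A B (FrobAlg.out A p a) * b ^ p)
            = (a ^ p) ⊗ₜ[A] (b ^ p)
          rw [show algebraMap A B (FrobAlg.out A p a) * b ^ p
              = (FrobAlg.out A p a) • (b ^ p) from (Algebra.smul_def _ _).symm,
            ← TensorProduct.smul_tmul]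
          congr 1
          rw [Algebra.smul_def, mul_one]
          show frobenius A p (FrobAlg.out A p a) = a ^ p
          rfl
        | add x y ihx ihy =>
          rw [map_add]
          show (1 : FrobAlg A p) ⊗ₜ[A] (FrobAlg.out B p (π x) + FrobAlg.out B p (π y))
            = (x + y) ^ p
          rw [TensorProduct.tmul_add, ihx, ihy, add_pow_char]
      have hker : ∀ x ∈ RingHom.ker π, IsNilpotent x := by
        intro x hx
        refine ⟨p, ?_⟩
        rw [← hfrob x, show π x = 0 from hx]
        show (1 : FrobAlg A p) ⊗ₜ[A] (0 : B) = 0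
        rw [TensorProduct.tmul_zero]
      haveI : Algebra.FormallySmooth (FrobAlg A p) (FrobAlg B p) :=
        inferInstanceAs (Algebra.FormallySmooth A B)
      haveI : Algebra.FinitePresentation (FrobAlg A p) (FrobAlg B p) :=
        inferInstanceAs (Algebra.FinitePresentation A B)
      haveI : Algebra.FormallyEtale (FrobAlg A p) (FrobAlg A p ⊗[A] B) := inferInstance
      haveI : Module.Finite (FrobAlg A p) (FrobAlg A p ⊗[A] B) := inferInstance
      haveI : Algebra.FiniteType (FrobAlg A p) (FrobAlg A p ⊗[A] B) := inferInstance
      obtain ⟨σ, hσ⟩ := exists_section_of_formallySmooth π hπsurj hker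
      have hid := section_comp_eq_id_of_formallyUnramified π σ hσ hker
      exact ⟨fun x y hxy => by rw [← hid x, ← hid y, hxy], hπsurj⟩
  -- Assemble the additive equivalence `N ⊗[A] FrobAlg A p ≃ N ⊗[B] FrobAlg B p`.
  haveI iSC : SMulCommClass A B (FrobAlg B p) := by
    constructor
    intro a b x
    rw [Algebra.smul_def, Algebra.smul_def, Algebra.smul_def, Algebra.smul_def,
      mul_left_comm]
  let ρbil : B →ₗ[B] (FrobAlg A p →ₗ[A] FrobAlg B p) :=
    { toFun := fun b =>
        { toFun := fun a => FrobAlg.mk B p (algebraMap A B (FrobAlg.out A p a) * b ^ p)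
          map_add' := fun a a' => by
            show (algebraMap A B (FrobAlg.out A p a + FrobAlg.out A p a') * b ^ p : B)
              = algebraMap A B (FrobAlg.out A p a) * b ^ p
                + algebraMap A B (FrobAlg.out A p a') * b ^ p
            rw [map_add, add_mul]
          map_smul' := fun c a => by
            show (algebraMap A B (c ^ p * FrobAlg.out A p a) * b ^ p : B)
              = (algebraMap A B c) ^ p * (algebraMap A B (FrobAlg.out A p a) * b ^ p)
            rw [map_mul, map_pow]
            ring }
      map_add' := fun b b' => by
        ext a
        show (algebraMap A B (FrobAlg.out A p a) * (b + b') ^ p : B)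
          = algebraMap A B (FrobAlg.out A p a) * b ^ p
            + algebraMap A B (FrobAlg.out A p a) * b' ^ p
        rw [add_pow_char, mul_add]
      map_smul' := fun c b => by
        ext a
        show (algebraMap A B (FrobAlg.out A p a) * (c * b) ^ p : B)
          = c ^ p * (algebraMap A B (FrobAlg.out A p a) * b ^ p)
        rw [mul_pow]
        ring }
  let ρ : (B ⊗[A] FrobAlg A p) →ₗ[B] FrobAlg B p :=
    TensorProduct.AlgebraTensorModule.lift ρbil
  have hρcomm : ∀ z : B ⊗[A] FrobAlg A p,
      ρ z = π (TensorProduct.comm A B (FrobAlg A p) z) := by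
    intro z
    induction z using TensorProduct.induction_on with
    | zero => rw [map_zero, map_zero, map_zero]
    | tmul b a =>
      rw [TensorProduct.comm_tmul, hπ]
      rfl
    | add x y ihx ihy => rw [map_add, map_add, map_add, ihx, ihy]
  have hρbij : Function.Bijective ρ := by
    have h1 : ⇑ρ = ⇑π ∘ ⇑(TensorProduct.comm A B (FrobAlg A p)) := funext hρcomm
    rw [h1]
    exact hπbij.comp (LinearEquiv.bijective _)
  let E : (N ⊗[A] FrobAlg A p) ≃ₗ[B] (N ⊗[B] FrobAlg B p) :=
    (TensorProduct.AlgebraTensorModule.cancelBaseChange A B B N (FrobAlg A p)).symm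
      ≪≫ₗ TensorProduct.congr (LinearEquiv.refl B N) (LinearEquiv.ofBijective ρ hρbij)
  have hfin : ∀ x, θ x = E x := by
    intro x
    induction x using TensorProduct.induction_on with
    | zero => rw [map_zero, map_zero]
    | tmul n a =>
      rw [hθ]
      show _ = (TensorProduct.congr (LinearEquiv.refl B N) (LinearEquiv.ofBijective ρ hρbij))
        ((TensorProduct.AlgebraTensorModule.cancelBaseChange A B B N (FrobAlg A p)).symm
          (n ⊗ₜ[A] a))
      rw [TensorProduct.AlgebraTensorModule.cancelBaseChange_symm_tmul,
        TensorProduct.congr_tmul]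
      congr 1
      show _ = ρ ((1 : B) ⊗ₜ[A] a)
      have h2 : ρ ((1 : B) ⊗ₜ[A] a)
          = FrobAlg.mk B p (algebraMap A B (FrobAlg.out A p a) * (1 : B) ^ p) := rfl
      rw [h2, one_pow, mul_one]
    | add x y ihx ihy => rw [map_add, map_add, ihx, ihy]
  have hE : ⇑θ = ⇑E := funext hfin
  rw [hE]
  exact E.bijective
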